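/- Let L > 0, ε > 0, η > 0, φ₊, φ₋ be constants, let ρ : [-L, L] → ℝ be continuous and let φ : [-L, L] → ℝ be twice continuously differentiable with ε φ''(x) = -ρ(x) for all x ∈ [-L, L], and satisfying the Robin boundary conditions (φ(L) - φ₊) + η φ'(L) = 0 and (φ(-L) - φ₋) - η φ'(-L) = 0. Then ∫_{-L}^{L} (1/2) ρ(x) φ(x) dx + (ε/(2η)) ( φ₊ φ(L) + φ₋ φ(-L) ) = ∫_{-L}^{L} (ε/2) (φ'(x))² dx + (ε/(2η)) ( φ(L)² + φ(-L)² ). -/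

import Mathlib

open MeasureTheory intervalIntegral

/-- Equivalence of the two forms of the total electrostatic energy for a solution
of the Poisson equation ε φ'' = -ρ with Robin boundary conditions at x = ±L. -/
theorem energy_forms_equivalent
    (L ε η φp φm : ℝ) (hL : 0 < L) (hε : 0 < ε) (hη : 0 < η)
    (ρ φ : ℝ → ℝ) (hρ : Continuous ρ) (hφ : ContDiff ℝ 2 φ)
    (hpde : ∀ x ∈ Set.Icc (-L) L, ε * deriv (deriv φ) x = -ρ x)
    (hRobinR : (φ L - φp) + η * deriv φ L = 0)
    (hRobinL : (φ (-L) - φm) - η * deriv φ (-L) = 0) :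
    (∫ x in (-L)..L, (1 / 2) * ρ x * φ x)
        + (ε / (2 * η)) * (φp * φ L + φm * φ (-L))
      = (∫ x in (-L)..L, (ε / 2) * (deriv φ x) ^ 2)
        + (ε / (2 * η)) * (φ L ^ 2 + φ (-L) ^ 2) := by
  have hφ' : ContDiff ℝ 1 (deriv φ) := (hφ.iterate_deriv' 1 1).of_le (le_refl _)
  have hd1 : ∀ x, HasDerivAt φ (deriv φ x) x :=
    fun x => (hφ.differentiable (by norm_num)).differentiableAt.hasDerivAt
  have hd2 : ∀ x, HasDerivAt (deriv φ) (deriv (deriv φ) x) x :=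
    fun x => (hφ'.differentiable (by norm_num)).differentiableAt.hasDerivAt
  have hc2 : Continuous (deriv (deriv φ)) := by
    have := hφ'.continuous_deriv le_rfl
    exact this
  have hc1 : Continuous (deriv φ) := hφ'.continuous
  have hc0 : Continuous φ := hφ.continuous
  -- integration by parts: ∫ φ * φ'' = φ(L)φ'(L) - φ(-L)φ'(-L) - ∫ φ'²
  have ibp := intervalIntegral.integral_mul_deriv_eq_deriv_mul
    (u := φ) (u' := deriv φ) (v := deriv φ) (v' := deriv (deriv φ))
    (a := -L) (b := L)
    (fun x _ => hd1 x) (fun x _ => hd2 x)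
    (hc1.intervalIntegrable _ _) (hc2.intervalIntegrable _ _)
  -- rewrite first integral using pde
  have hcongr : (∫ x in (-L)..L, (1 / 2) * ρ x * φ x)
      = ∫ x in (-L)..L, (-(ε / 2)) * (φ x * deriv (deriv φ) x) := by
    apply intervalIntegral.integral_congr
    intro x hx
    rw [Set.uIcc_of_le (by linarith)] at hx
    have := hpde x hx
    have hρx : ρ x = -(ε * deriv (deriv φ) x) := by linarith
    show 1 / 2 * ρ x * φ x = -(ε / 2) * (φ x * deriv (deriv φ) x); rw [hρx]; ring
  rw [hcongr, intervalIntegral.integral_const_mul, ibp]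
  have hInt2 : (∫ x in (-L)..L, (ε / 2) * (deriv φ x) ^ 2)
      = (ε / 2) * ∫ x in (-L)..L, deriv φ x * deriv φ x := by
    rw [← intervalIntegral.integral_const_mul]
    apply intervalIntegral.integral_congr
    intro x _; ring
  rw [hInt2]
  have hR : deriv φ L = (φp - φ L) / η := by field_simp; linarith
  have hLe : deriv φ (-L) = (φ (-L) - φm) / η := by field_simp; linarith
  rw [hR, hLe]
  field_simp
  ring
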